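/- Let $f_t(\lambda) = \sqrt{\bar\alpha_{t-1}/\bar\alpha_t} - |b_t|\sqrt{v_t}/(\lambda\bar\alpha_t + v_t)$ for a strictly decreasing schedule $1 = \bar\alpha_0 > \bar\alpha_1 > \cdots > \bar\alpha_T > 0$ (with $v_t = 1-\bar\alpha_t$ and $b_t$ the DDIM score coefficient), and define $G(\lambda) = \prod_{t=1}^T f_t(\lambda)$ on the domain where all factors are positive. Then $G$ is strictly increasing, $G(1) < 1$, $\lim_{\lambda\to\infty} G(\lambda) = 1/\sqrt{\bar\alpha_T} > 1$, and hence there exists a unique $\lambda^{**} > 1$ with $G(\lambda^{**}) = 1$. -/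

import Mathlib

/-- the discrete Moran equation. For a strictly decreasing schedule
`1 = ᾱ_0 > ᾱ_1 > ⋯ > ᾱ_T > 0`, the product `G(λ) = ∏_{t=1}^T f_t(λ)` is strictly
increasing on the domain where all factors are positive, `G(1) < 1`,
`G(λ) → 1/√ᾱ_T > 1` as `λ → ∞`, and there is a unique `λ** > 1` with `G(λ**) = 1`. -/
theorem stmt_8 (T : ℕ) (hT : 1 ≤ T) (α : ℕ → ℝ) (h0 : α 0 = 1)
    (hanti : ∀ s t : ℕ, s < t → t ≤ T → α t < α s) (hpos : 0 < α T) :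
    let b : ℕ → ℝ := fun t =>
      Real.sqrt (1 - α (t - 1)) - Real.sqrt (α (t - 1)) * Real.sqrt (1 - α t) / Real.sqrt (α t)
    let f : ℕ → ℝ → ℝ := fun t lam =>
      Real.sqrt (α (t - 1) / α t) - |b t| * Real.sqrt (1 - α t) / (lam * α t + (1 - α t))
    let G : ℝ → ℝ := fun lam => ∏ t ∈ Finset.Icc 1 T, f t lam
    StrictMonoOn G {lam : ℝ | 0 < lam ∧ ∀ t ∈ Finset.Icc 1 T, 0 < f t lam} ∧
    G 1 < 1 ∧
    Filter.Tendsto G Filter.atTop (nhds (1 / Real.sqrt (α T))) ∧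
    1 < 1 / Real.sqrt (α T) ∧
    (∃! lam : ℝ, 1 < lam ∧ G lam = 1) := by
  intro b f G
  -- basic positivity facts
  have hαpos : ∀ t, t ≤ T → 0 < α t := by
    intro t ht
    rcases eq_or_lt_of_le ht with h | h
    · exact h ▸ hpos
    · exact hpos.trans (hanti t T h le_rfl)
  have hαlt1 : ∀ t, 1 ≤ t → t ≤ T → α t < 1 := by
    intro t h1 h2
    have := hanti 0 t h1 h2
    linarith [h0 ▸ this]
  have hne : (Finset.Icc 1 T).Nonempty := Finset.nonempty_Icc.mpr hT
  -- per-factor facts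
  have key : ∀ t ∈ Finset.Icc 1 T,
      (∀ x y : ℝ, 0 < x → x < y → f t x < f t y) ∧
      (0 < f t 1 ∧ f t 1 < 1) ∧
      Filter.Tendsto (f t) Filter.atTop
        (nhds (Real.sqrt (α (t - 1)) / Real.sqrt (α t))) := by
    intro t ht
    rw [Finset.mem_Icc] at ht
    obtain ⟨ht1, ht2⟩ := ht
    set p := α (t - 1) with hpdef
    set q := α t with hqdef
    have hq : 0 < q := hαpos t ht2
    have hq1 : q < 1 := hαlt1 t ht1 ht2
    have hpq : q < p := hanti (t - 1) t (by omega) ht2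
    have hp : 0 < p := hq.trans hpq
    have hp1 : p ≤ 1 := by
      rcases Nat.eq_zero_or_pos (t - 1) with h | h
      · rw [hpdef, h, h0]
      · exact le_of_lt (hαlt1 (t - 1) h (by omega))
    have hsq : (0:ℝ) < Real.sqrt q := Real.sqrt_pos.mpr hq
    have hsp : (0:ℝ) < Real.sqrt p := Real.sqrt_pos.mpr hp
    have hs1q : (0:ℝ) < Real.sqrt (1 - q) := Real.sqrt_pos.mpr (by linarith)
    have hmq : Real.sqrt q * Real.sqrt q = q := Real.mul_self_sqrt hq.le
    have hmp : Real.sqrt p * Real.sqrt p = p := Real.mul_self_sqrt hp.le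
    have hm1q : Real.sqrt (1 - q) * Real.sqrt (1 - q) = 1 - q :=
      Real.mul_self_sqrt (by linarith)
    have hm1p : Real.sqrt (1 - p) * Real.sqrt (1 - p) = 1 - p :=
      Real.mul_self_sqrt (by linarith)
    -- b t < 0
    have hb : b t < 0 := by
      show Real.sqrt (1 - p) - Real.sqrt p * Real.sqrt (1 - q) / Real.sqrt q < 0
      have h1 : Real.sqrt (1 - p) < Real.sqrt (1 - q) :=
        Real.sqrt_lt_sqrt (by linarith) (by linarith)
      have h2 : Real.sqrt q < Real.sqrt p := Real.sqrt_lt_sqrt hq.le hpq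
      have h3 : Real.sqrt (1 - q) < Real.sqrt p * Real.sqrt (1 - q) / Real.sqrt q := by
        rw [lt_div_iff₀ hsq]
        nlinarith
      linarith
    have hcpos : 0 < |b t| * Real.sqrt (1 - q) :=
      mul_pos (abs_pos.mpr hb.ne) hs1q
    -- monotonicity
    have hmono : ∀ x y : ℝ, 0 < x → x < y → f t x < f t y := by
      intro x y hx hxy
      show Real.sqrt (p / q) - |b t| * Real.sqrt (1 - q) / (x * q + (1 - q)) <
        Real.sqrt (p / q) - |b t| * Real.sqrt (1 - q) / (y * q + (1 - q))
      have hdx : 0 < x * q + (1 - q) := by nlinarith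
      have hdxy : x * q + (1 - q) < y * q + (1 - q) := by nlinarith
      have := div_lt_div_of_pos_left hcpos hdx hdxy
      linarith
    -- value at 1
    have hf1 : f t 1 = Real.sqrt p * Real.sqrt q + Real.sqrt (1 - p) * Real.sqrt (1 - q) := by
      show Real.sqrt (p / q) - |b t| * Real.sqrt (1 - q) / (1 * q + (1 - q)) = _
      have habs : |b t| = Real.sqrt p * Real.sqrt (1 - q) / Real.sqrt q - Real.sqrt (1 - p) := by
        rw [abs_of_neg hb]; ring
      rw [habs, Real.sqrt_div hp.le q]
      have hd : 1 * q + (1 - q) = 1 := by ring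
      rw [hd]
      have huw : Real.sqrt q * Real.sqrt q + Real.sqrt (1 - q) * Real.sqrt (1 - q) = 1 := by
        rw [hmq, hm1q]; ring
      field_simp
      linear_combination (-(Real.sqrt p)) * huw
    have hf1pos : 0 < f t 1 := by
      rw [hf1]
      exact add_pos_of_pos_of_nonneg (mul_pos hsp hsq) (by positivity)
    have hf1lt : f t 1 < 1 := by
      rw [hf1]
      have h2 : Real.sqrt q < Real.sqrt p := Real.sqrt_lt_sqrt hq.le hpq
      have h1 : Real.sqrt (1 - p) < Real.sqrt (1 - q) :=
        Real.sqrt_lt_sqrt (by linarith) (by linarith)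
      nlinarith [mul_pos (sub_pos.mpr h2) (sub_pos.mpr h2),
        mul_pos (sub_pos.mpr h1) (sub_pos.mpr h1)]
    -- limit
    have hlim : Filter.Tendsto (f t) Filter.atTop
        (nhds (Real.sqrt p / Real.sqrt q)) := by
      have hd : Filter.Tendsto (fun lam : ℝ => lam * q + (1 - q)) Filter.atTop Filter.atTop :=
        Filter.tendsto_atTop_add_const_right _ _ (Filter.tendsto_id.atTop_mul_const hq)
      have h0' : Filter.Tendsto (fun lam : ℝ => |b t| * Real.sqrt (1 - q) / (lam * q + (1 - q)))
          Filter.atTop (nhds 0) := Filter.Tendsto.div_atTop tendsto_const_nhds hd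
      have h1' := (tendsto_const_nhds (x := Real.sqrt (p / q)) (f := Filter.atTop)).sub h0'
      rw [sub_zero] at h1'
      rw [← Real.sqrt_div hp.le q]
      exact h1'
    exact ⟨hmono, ⟨hf1pos, hf1lt⟩, hlim⟩
  -- G-level monotonicity helper
  have hGmono : ∀ x y : ℝ, 0 < x → (∀ t ∈ Finset.Icc 1 T, 0 < f t x) → x < y → G x < G y := by
    intro x y hx hfx hxy
    exact Finset.prod_lt_prod_of_nonempty hfx
      (fun t ht => (key t ht).1 x y hx hxy) hne
  have hfpos1 : ∀ t ∈ Finset.Icc 1 T, 0 < f t 1 := fun t ht => (key t ht).2.1.1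
  have hfposge : ∀ lam : ℝ, 1 ≤ lam → ∀ t ∈ Finset.Icc 1 T, 0 < f t lam := by
    intro lam hlam t ht
    rcases eq_or_lt_of_le hlam with h | h
    · exact h ▸ hfpos1 t ht
    · exact (hfpos1 t ht).trans ((key t ht).1 1 lam one_pos h)
  have hmonoIci : StrictMonoOn G (Set.Ici (1:ℝ)) := by
    intro x hx y _ hxy
    exact hGmono x y (by linarith [Set.mem_Ici.mp hx]) (hfposge x hx) hxy
  -- part 2
  have hG1 : G 1 < 1 := by
    have : G 1 < ∏ t ∈ Finset.Icc 1 T, (1:ℝ) :=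
      Finset.prod_lt_prod_of_nonempty hfpos1 (fun t ht => (key t ht).2.1.2) hne
    simpa using this
  -- telescoping
  have htel : ∀ n, n ≤ T →
      ∏ t ∈ Finset.Icc 1 n, (Real.sqrt (α (t - 1)) / Real.sqrt (α t))
        = 1 / Real.sqrt (α n) := by
    intro n hn
    induction n with
    | zero => simp [h0]
    | succ m ih =>
      rw [Finset.prod_Icc_succ_top (by omega), ih (by omega)]
      have hsm : Real.sqrt (α m) ≠ 0 :=
        (Real.sqrt_pos.mpr (hαpos m (by omega))).ne'
      simp only [Nat.add_sub_cancel]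
      field_simp
  -- part 3
  have hGlim : Filter.Tendsto G Filter.atTop (nhds (1 / Real.sqrt (α T))) := by
    have := tendsto_finset_prod (Finset.Icc 1 T) (fun t ht => (key t ht).2.2)
    rwa [htel T le_rfl] at this
  -- part 4
  have h4 : 1 < 1 / Real.sqrt (α T) := by
    have hlt : Real.sqrt (α T) < 1 := by
      rw [show (1:ℝ) = Real.sqrt 1 by simp]
      exact Real.sqrt_lt_sqrt hpos.le (hαlt1 T hT le_rfl)
    exact one_lt_one_div (Real.sqrt_pos.mpr hpos) hlt
  refine ⟨?_, hG1, hGlim, h4, ?_⟩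
  · intro x hx y hy hxy
    exact hGmono x y hx.1 hx.2 hxy
  · -- existence and uniqueness
    obtain ⟨a, ha⟩ := Filter.eventually_atTop.mp (hGlim.eventually (eventually_gt_nhds h4))
    set M := max a 2 with hM
    have hGM : 1 < G M := ha M (le_max_left _ _)
    have hM1 : (1:ℝ) < M := lt_of_lt_of_le one_lt_two (le_max_right _ _)
    have hcont : ContinuousOn G (Set.Icc 1 M) := by
      apply continuousOn_finset_prod
      intro t ht
      rw [Finset.mem_Icc] at ht
      have hq : 0 < α t := hαpos t ht.2
      have hq1 : α t < 1 := hαlt1 t ht.1 ht.2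
      apply ContinuousOn.sub continuousOn_const
      apply ContinuousOn.div continuousOn_const (by fun_prop)
      intro x hx
      have hx1 : 1 ≤ x := hx.1
      nlinarith
    have h1mem : (1:ℝ) ∈ Set.Ioo (G 1) (G M) := ⟨hG1, hGM⟩
    obtain ⟨lam, hlam, hGlam⟩ := intermediate_value_Ioo hM1.le hcont h1mem
    refine ⟨lam, ⟨hlam.1, hGlam⟩, ?_⟩
    intro y ⟨hy1, hGy⟩
    exact hmonoIci.injOn (Set.mem_Ici.mpr hy1.le) (Set.mem_Ici.mpr hlam.1.le)
      (hGy.trans hGlam.symm)
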